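/- Let X be a Banach space, k ≥ 1, and let u : ℝ → X be (k+1)-times continuously differentiable on an interval [t − kτ, t] with τ > 0. Then there is a constant C_k depending only on k (not on u, t, τ or X) such that ‖(1/τ) Σ_{j=0}^k δ_j u(t − jτ) − u'(t)‖_X ≤ C_k τ^k max_{s ∈ [t−kτ, t]} ‖u^{(k+1)}(s)‖_X. -/

import Mathlib

open Set

section BDFAux
open Polynomial Finset

lemma coeff_one_sub_X_pow (ℓ j : ℕ) : ((1 - X : ℂ[X])^ℓ).coeff j = (-1)^j * ℓ.choose j := by
  rw [sub_eq_add_neg, add_comm, add_pow]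
  have hC : ∀ x : ℕ, ((-1 : ℂ[X]))^x = C ((-1 : ℂ)^x) := fun x => by
    rw [← C_1, ← C_neg, ← C_pow]
  simp only [one_pow, mul_one, neg_pow (X : ℂ[X]), finset_sum_coeff, hC, mul_assoc, coeff_C_mul,
    coeff_mul_natCast, coeff_natCast_mul, coeff_X_pow, mul_ite, mul_one, mul_zero, ite_mul, zero_mul]
  rw [Finset.sum_ite_eq (Finset.range (ℓ+1)) j]
  by_cases h : j ≤ ℓ
  · simp [Finset.mem_range, Nat.lt_succ_iff, h]
  · simp [Finset.mem_range, Nat.lt_succ_iff, h, Nat.choose_eq_zero_of_lt (by omega : ℓ < j)]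

lemma delta_eq (k : ℕ) (δc : ℕ → ℝ)
    (hδ : ∀ ζ : ℂ, ∑ j ∈ Finset.range (k + 1), (δc j : ℂ) * ζ ^ j
        = ∑ ℓ ∈ Finset.Icc 1 k, ((ℓ : ℂ))⁻¹ * (1 - ζ) ^ ℓ) :
    ∀ j ∈ Finset.range (k+1), δc j = ∑ ℓ ∈ Finset.Icc 1 k, (ℓ:ℝ)⁻¹ * ((-1)^j * ℓ.choose j) := by
  intro j hj
  set P : ℂ[X] := ∑ i ∈ Finset.range (k+1), C (δc i : ℂ) * X ^ i with hP
  set Q : ℂ[X] := ∑ ℓ ∈ Finset.Icc 1 k, C ((ℓ:ℂ))⁻¹ * (1 - X) ^ ℓ with hQ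
  have hPQ : P = Q := by
    apply Polynomial.funext
    intro ζ
    simp only [hP, hQ, eval_finset_sum, eval_mul, eval_pow, eval_C, eval_X, eval_sub, eval_one]
    exact hδ ζ
  have h1 : P.coeff j = (δc j : ℂ) := by
    simp only [hP, finset_sum_coeff, coeff_C_mul, coeff_X_pow, mul_ite, mul_one, mul_zero]
    rw [Finset.sum_ite_eq (Finset.range (k+1)) j]
    simp [hj]
  have h2 : Q.coeff j = ((∑ ℓ ∈ Finset.Icc 1 k, (ℓ:ℝ)⁻¹ * ((-1)^j * ℓ.choose j) : ℝ) : ℂ) := by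
    simp only [hQ, finset_sum_coeff, coeff_C_mul, coeff_one_sub_X_pow]
    push_cast
    ring
  have := h1.symm.trans (hPQ ▸ h2)
  exact_mod_cast this

lemma alt_sum_choose_real (m : ℕ) :
    ∑ i ∈ Finset.range (m+1), (-1:ℝ)^i * (m.choose i) = if m = 0 then 1 else 0 := by
  have h := Int.alternating_sum_range_choose (n := m)
  have h2 := congrArg (Int.cast : ℤ → ℝ) h
  push_cast at h2
  exact h2

lemma bdf_inner_sum (k ℓ n : ℕ) (hℓ : ℓ ≤ k) :
    ∑ j ∈ Finset.range (k+1), (-1:ℝ)^j * ℓ.choose j * j.choose n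
      = if ℓ = n then (-1:ℝ)^n else 0 := by
  have hsub : Finset.range (ℓ+1) ⊆ Finset.range (k+1) := by
    intro x hx; simp only [Finset.mem_range] at *; omega
  rw [← Finset.sum_subset hsub (by
    intro x _ hx
    simp only [Finset.mem_range, Nat.lt_succ_iff, not_le] at hx
    rw [Nat.choose_eq_zero_of_lt hx]; ring)]
  by_cases hn : n ≤ ℓ
  · have hrange : Finset.range (ℓ+1) = Finset.Icc 0 ℓ := by
      ext x; simp [Nat.lt_succ_iff]
    have hsplit : ∑ j ∈ Finset.range (ℓ+1), (-1:ℝ)^j * ℓ.choose j * j.choose n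
        = ∑ j ∈ Finset.Ico n (ℓ+1), (-1:ℝ)^j * ℓ.choose j * j.choose n := by
      rw [Finset.range_eq_Ico]
      rw [← Finset.sum_subset (Finset.Ico_subset_Ico_left (Nat.zero_le n)) (by
        intro x hx hx2
        simp only [Finset.mem_Ico] at hx hx2
        rw [Nat.choose_eq_zero_of_lt (by omega : x < n)]; ring)]
    rw [hsplit, Finset.sum_Ico_eq_sum_range]
    have hterm : ∀ i ∈ Finset.range (ℓ + 1 - n),
        (-1:ℝ)^(n+i) * ℓ.choose (n+i) * (n+i).choose n
          = ((-1:ℝ)^n * ℓ.choose n) * ((-1:ℝ)^i * (ℓ-n).choose i) := by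
      intro i hi
      simp only [Finset.mem_range] at hi
      have hc := Nat.choose_mul (n := ℓ) (k := n + i) (s := n) (by omega)
      have hc2 : ((ℓ.choose (n+i) * (n+i).choose n : ℕ) : ℝ)
          = ((ℓ.choose n * (ℓ - n).choose i : ℕ) : ℝ) := by
        rw [hc, Nat.add_sub_cancel_left]
      push_cast at hc2
      rw [pow_add]
      linear_combination ((-1:ℝ)^n * (-1)^i) * hc2
    rw [Finset.sum_congr rfl hterm, ← Finset.mul_sum]
    have : ℓ + 1 - n = (ℓ - n) + 1 := by omega
    rw [this, alt_sum_choose_real]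
    by_cases h : ℓ = n
    · subst h; simp
    · rw [if_neg (by omega), if_neg h, mul_zero]
  · rw [if_neg (by omega)]
    apply Finset.sum_eq_zero
    intro j hj
    simp only [Finset.mem_range, Nat.lt_succ_iff] at hj
    rw [Nat.choose_eq_zero_of_lt (by omega : j < n)]; ring

lemma bdf_B (k : ℕ) (δc : ℕ → ℝ)
    (hδ : ∀ ζ : ℂ, ∑ j ∈ Finset.range (k + 1), (δc j : ℂ) * ζ ^ j
        = ∑ ℓ ∈ Finset.Icc 1 k, ((ℓ : ℂ))⁻¹ * (1 - ζ) ^ ℓ)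
    (n : ℕ) (hn : n ≤ k) :
    ∑ j ∈ Finset.range (k+1), δc j * (j.choose n : ℝ)
      = if n = 0 then 0 else (-1:ℝ)^n / n := by
  have h1 : ∀ j ∈ Finset.range (k+1), δc j * (j.choose n : ℝ)
      = ∑ ℓ ∈ Finset.Icc 1 k, (ℓ:ℝ)⁻¹ * ((-1:ℝ)^j * ℓ.choose j * j.choose n) := by
    intro j hj
    rw [delta_eq k δc hδ j hj, Finset.sum_mul]
    exact Finset.sum_congr rfl fun ℓ _ => by ring
  rw [Finset.sum_congr rfl h1, Finset.sum_comm]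
  have h2 : ∀ ℓ ∈ Finset.Icc 1 k,
      ∑ j ∈ Finset.range (k+1), (ℓ:ℝ)⁻¹ * ((-1:ℝ)^j * ℓ.choose j * j.choose n)
      = if ℓ = n then (ℓ:ℝ)⁻¹ * (-1:ℝ)^n else 0 := by
    intro ℓ hℓ
    rw [← Finset.mul_sum]
    have : ∑ j ∈ Finset.range (k+1), (-1:ℝ)^j * ℓ.choose j * j.choose n
        = if ℓ = n then (-1:ℝ)^n else 0 := bdf_inner_sum k ℓ n (Finset.mem_Icc.mp hℓ).2
    rw [this]
    split_ifs <;> simp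
  rw [Finset.sum_congr rfl h2, Finset.sum_ite_eq' (Finset.Icc 1 k) n]
  by_cases h : n = 0
  · subst h; simp
  · rw [if_pos (Finset.mem_Icc.mpr ⟨by omega, hn⟩), if_neg h, div_eq_mul_inv, mul_comm]

lemma coeff_one_descPochhammer_real : ∀ m : ℕ, 1 ≤ m →
    (descPochhammer ℝ m).coeff 1 = (-1:ℝ)^(m-1) * (m-1).factorial := by
  intro m hm
  induction m, hm using Nat.le_induction with
  | base =>
    rw [descPochhammer_one]
    simp
  | succ m hm ih =>
    rw [descPochhammer_succ_right, mul_sub, coeff_sub, coeff_mul_X, ← C_eq_natCast, coeff_mul_C]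
    rw [coeff_zero_eq_eval_zero, descPochhammer_eval_zero, if_neg (by omega)]
    rw [ih]
    obtain ⟨n, rfl⟩ : ∃ n, m = n + 1 := ⟨m - 1, by omega⟩
    simp only [Nat.add_sub_cancel]
    rw [Nat.factorial_succ]
    push_cast
    ring

lemma bdf_moments (k : ℕ) (δc : ℕ → ℝ)
    (hδ : ∀ ζ : ℂ, ∑ j ∈ Finset.range (k + 1), (δc j : ℂ) * ζ ^ j
        = ∑ ℓ ∈ Finset.Icc 1 k, ((ℓ : ℂ))⁻¹ * (1 - ζ) ^ ℓ) :
    ∀ m, m ≤ k →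
      ∑ j ∈ Finset.range (k+1), δc j * (j:ℝ)^m = if m = 1 then -1 else 0 := by
  intro m
  induction m using Nat.strong_induction_on with
  | _ m ih =>
  intro hm
  match m with
  | 0 =>
    have h := bdf_B k δc hδ 0 (by omega)
    simpa using h
  | 1 =>
    have h := bdf_B k δc hδ 1 (by omega)
    simp only [Nat.choose_one_right] at h
    rw [if_pos rfl]
    simpa using h
  | (n+2) =>
    set m' := n + 2 with hm'
    rw [if_neg (by omega)]
    -- the pairing with descPochhammer
    have hL1 : ∑ j ∈ Finset.range (k+1), δc j * (descPochhammer ℝ m').eval ((j:ℕ):ℝ)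
        = (-1:ℝ)^m' * (m'-1).factorial := by
      have hterm : ∀ j ∈ Finset.range (k+1),
          δc j * (descPochhammer ℝ m').eval ((j:ℕ):ℝ)
            = (m'.factorial : ℝ) * (δc j * (j.choose m' : ℝ)) := by
        intro j _
        rw [descPochhammer_eval_eq_descFactorial, Nat.descFactorial_eq_factorial_mul_choose]
        push_cast
        ring
      rw [Finset.sum_congr rfl hterm, ← Finset.mul_sum, bdf_B k δc hδ m' hm,
        if_neg (by omega)]
      have hfac : (m'.factorial : ℝ) = (m' : ℝ) * ((m'-1).factorial : ℝ) := by
        have : m' = (m' - 1) + 1 := by omega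
        rw [this, Nat.factorial_succ]
        push_cast
        ring
      rw [hfac]
      have hm0 : (m' : ℝ) ≠ 0 := by positivity
      field_simp
    have hL2 : ∑ j ∈ Finset.range (k+1), δc j * (descPochhammer ℝ m').eval ((j:ℕ):ℝ)
        = ∑ i ∈ Finset.range (m'+1), (descPochhammer ℝ m').coeff i *
            (∑ j ∈ Finset.range (k+1), δc j * ((j:ℕ):ℝ)^i) := by
      have heval : ∀ j ∈ Finset.range (k+1),
          δc j * (descPochhammer ℝ m').eval ((j:ℕ):ℝ)
            = ∑ i ∈ Finset.range (m'+1), (descPochhammer ℝ m').coeff i * (δc j * ((j:ℕ):ℝ)^i) := by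
        intro j _
        rw [eval_eq_sum_range' (n := m'+1) (by rw [descPochhammer_natDegree]; omega), Finset.mul_sum]
        exact Finset.sum_congr rfl fun i _ => by ring
      rw [Finset.sum_congr rfl heval, Finset.sum_comm]
      exact Finset.sum_congr rfl fun i _ => by rw [Finset.mul_sum]
    -- simplify hL2 using induction hypothesis
    have hcm : (descPochhammer ℝ m').coeff m' = 1 := by
      have h := monic_descPochhammer ℝ m'
      have hdeg := descPochhammer_natDegree ℝ m' -- natDegree = m'
      rw [Monic.def, Polynomial.leadingCoeff, hdeg] at h
      exact h
    have hrest : ∑ i ∈ Finset.range m', (descPochhammer ℝ m').coeff i *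
        (∑ j ∈ Finset.range (k+1), δc j * ((j:ℕ):ℝ)^i)
        = -(descPochhammer ℝ m').coeff 1 := by
      have : ∀ i ∈ Finset.range m', (descPochhammer ℝ m').coeff i *
          (∑ j ∈ Finset.range (k+1), δc j * ((j:ℕ):ℝ)^i)
          = if i = 1 then -(descPochhammer ℝ m').coeff i else 0 := by
        intro i hi
        rw [Finset.mem_range] at hi
        rw [ih i hi (by omega)]
        split_ifs <;> ring
      rw [Finset.sum_congr rfl this, Finset.sum_ite_eq' (Finset.range m') 1]
      rw [if_pos (Finset.mem_range.mpr (by omega))]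
    have hL3 : (-1:ℝ)^m' * (m'-1).factorial
        = -(descPochhammer ℝ m').coeff 1 + ∑ j ∈ Finset.range (k+1), δc j * ((j:ℕ):ℝ)^m' := by
      rw [← hL1, hL2, Finset.sum_range_succ, hrest, hcm, one_mul]
    have hc1 : (descPochhammer ℝ m').coeff 1 = (-1:ℝ)^(m'-1) * (m'-1).factorial :=
      coeff_one_descPochhammer_real m' (by omega)
    rw [hc1] at hL3
    have h1 : m' - 1 = n + 1 := by omega
    rw [h1] at hL3
    rw [hm'] at hL3 ⊢
    have hpow : (-1:ℝ)^(n+2) = -(-1:ℝ)^(n+1) := by ring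
    rw [hpow] at hL3
    linarith [hL3]



lemma taylor_forward {X : Type*} [NormedAddCommGroup X] [NormedSpace ℝ X]
    (n : ℕ) : ∀ (u : ℕ → ℝ → X) {a b : ℝ}, a ≤ b →
    (∀ m < n + 1, ∀ s ∈ Icc a b, HasDerivWithinAt (u m) (u (m+1) s) (Icc a b) s) →
    ∀ {M : ℝ}, (∀ s ∈ Icc a b, ‖u (n+1) s‖ ≤ M) →
    ∀ x ∈ Icc a b,
      ‖u 0 x - ∑ m ∈ Finset.range (n+1), (((x - a)^m / m.factorial) • u m a)‖
        ≤ M * (x - a)^(n+1) / (n+1).factorial := by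
  induction n with
  | zero =>
    intro u a b hab hu M hM x hx
    have h := norm_image_sub_le_of_norm_deriv_le_segment'
      (f := u 0) (f' := u 1) (a := a) (b := b)
      (fun s hs => hu 0 (by omega) s hs)
      (fun s hs => hM s (Ico_subset_Icc_self hs)) x hx
    simpa using h
  | succ n IH =>
    intro u a b hab hu M hM x hx
    have IH' := IH (fun m => u (m+1)) hab
      (fun m hm s hs => hu (m+1) (by omega) s hs) hM
    have hg : ∀ y ∈ Icc a b, HasDerivWithinAt
        (fun y => u 0 y - ∑ m ∈ Finset.range (n+2), (((y - a)^m / m.factorial) • u m a))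
        (u 1 y - ∑ m ∈ Finset.range (n+1), (((y - a)^m / m.factorial) • u (m+1) a))
        (Icc a b) y := by
      intro y hy
      have hterm : ∀ m : ℕ, m ∈ Finset.range (n+2) → HasDerivWithinAt
          (fun z => ((z - a)^m / m.factorial) • u m a)
          (if m = 0 then (0:X) else ((y - a)^(m-1) / (m-1).factorial) • u m a)
          (Icc a b) y := by
        intro m _
        match m with
        | 0 =>
          rw [if_pos rfl]
          have heq : (fun z : ℝ => ((z - a)^0 / (Nat.factorial 0 : ℝ)) • u 0 a)
              = fun _ : ℝ => ((1:ℝ) • u 0 a) := by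
            funext z; norm_num
          rw [heq]
          exact hasDerivWithinAt_const y (Icc a b) _
        | (m'+1) =>
          rw [if_neg (by omega)]
          have hscal : HasDerivWithinAt (fun z => (z - a)^(m'+1) / (m'+1).factorial)
              ((y - a)^m' / m'.factorial) (Icc a b) y := by
            have h1 : HasDerivWithinAt (fun z : ℝ => (z - a)^(m'+1))
                (((m' : ℝ) + 1) * (y - a)^m') (Icc a b) y := by
              simpa [Pi.pow_def] using (((hasDerivAt_id y).sub_const a).pow (m'+1)).hasDerivWithinAt
            have h2 := h1.div_const ((m'+1).factorial : ℝ)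
            refine h2.congr_deriv ?_
            have hne : (m'.factorial : ℝ) ≠ 0 := by positivity
            rw [Nat.factorial_succ]
            push_cast
            field_simp
          have := hscal.smul_const (u (m'+1) a)
          simpa using this
      have hsum := HasDerivWithinAt.fun_sum hterm
      have hshift : ∑ m ∈ Finset.range (n+2),
          (if m = 0 then (0:X) else ((y - a)^(m-1) / (m-1).factorial) • u m a)
          = ∑ m ∈ Finset.range (n+1), (((y - a)^m / m.factorial) • u (m+1) a) := by
        rw [Finset.sum_range_succ' (fun m => if m = 0 then (0:X)
          else ((y - a)^(m-1) / (m-1).factorial) • u m a) (n+1)]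
        simp
      rw [hshift] at hsum
      exact (hu 0 (by omega) y hy).sub hsum
    have hbound : ∀ y ∈ Ico a b,
        ‖u 1 y - ∑ m ∈ Finset.range (n+1), (((y - a)^m / m.factorial) • u (m+1) a)‖
          ≤ M * (y - a)^(n+1) / (n+1).factorial :=
      fun y hy => IH' y (Ico_subset_Icc_self hy)
    have hcomp := image_norm_le_of_norm_deriv_right_le_deriv_boundary
      (f := fun y => u 0 y - ∑ m ∈ Finset.range (n+2), (((y - a)^m / m.factorial) • u m a))
      (f' := fun y => u 1 y - ∑ m ∈ Finset.range (n+1), (((y - a)^m / m.factorial) • u (m+1) a))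
      (fun y hy => (hg y hy).continuousWithinAt)
      (fun y hy => (hg y (Ico_subset_Icc_self hy)).mono_of_mem_nhdsWithin
        (Icc_mem_nhdsGE_of_mem hy))
      (B := fun y => M * (y - a)^(n+2) / (n+2).factorial)
      (B' := fun y => M * (y - a)^(n+1) / (n+1).factorial)
      (by
        have hsum0 : ∑ m ∈ Finset.range (n+2), (((a - a)^m / m.factorial) • u m a) = u 0 a := by
          rw [Finset.sum_eq_single 0]
          · norm_num
          · intro m _ hm
            match m with
            | (m'+1) => norm_num
          · intro h; exact absurd (Finset.mem_range.mpr (by omega)) h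
        show ‖u 0 a - ∑ m ∈ Finset.range (n+2), (((a - a)^m / m.factorial) • u m a)‖
          ≤ M * (a - a)^(n+2) / ((n+2).factorial : ℝ)
        rw [hsum0, sub_self, norm_zero, sub_self, zero_pow (by omega : n+2 ≠ 0)]
        norm_num)
      (fun y => by
        have h1 : HasDerivAt (fun z : ℝ => (z - a)^(n+2))
            (((n : ℝ) + 2) * (y - a)^(n+1)) y := by
          simpa [Pi.pow_def] using ((hasDerivAt_id y).sub_const a).pow (n+2)
        have h2 := (h1.const_mul M).div_const ((n+2).factorial : ℝ)
        refine h2.congr_deriv ?_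
        have hne : ((n+1).factorial : ℝ) ≠ 0 := by positivity
        rw [Nat.factorial_succ (n+1)]
        push_cast
        field_simp
        ring)
      hbound hx
    exact hcomp

lemma taylor_backward {X : Type*} [NormedAddCommGroup X] [NormedSpace ℝ X]
    (n : ℕ) (u : ℕ → ℝ → X) {a b : ℝ} (hab : a ≤ b)
    (hu : ∀ m < n + 1, ∀ s ∈ Icc a b, HasDerivWithinAt (u m) (u (m+1) s) (Icc a b) s)
    {M : ℝ} (hM : ∀ s ∈ Icc a b, ‖u (n+1) s‖ ≤ M) :
    ∀ x ∈ Icc a b,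
      ‖u 0 x - ∑ m ∈ Finset.range (n+1), (((x - b)^m / m.factorial) • u m b)‖
        ≤ M * (b - x)^(n+1) / (n+1).factorial := by
  intro x hx
  set v : ℕ → ℝ → X := fun m s => (-1:ℝ)^m • u m (a + b - s) with hv
  have hmaps : MapsTo (fun s : ℝ => a + b - s) (Icc a b) (Icc a b) := by
    intro y hy
    simp only [Set.mem_Icc] at *
    constructor <;> linarith [hy.1, hy.2]
  have hvd : ∀ m < n + 1, ∀ s ∈ Icc a b, HasDerivWithinAt (v m) (v (m+1) s) (Icc a b) s := by
    intro m hm s hs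
    have hinner : HasDerivWithinAt (fun s : ℝ => a + b - s) (-1) (Icc a b) s := by
      simpa using ((hasDerivAt_id s).const_sub (a+b)).hasDerivWithinAt
    have hcomp := HasDerivWithinAt.scomp s (hu m hm _ (hmaps hs)) hinner hmaps
    have h2 := hcomp.const_smul ((-1:ℝ)^m)
    have heq : ((-1:ℝ)^m) • ((-1:ℝ) • u (m+1) (a + b - s)) = v (m+1) s := by
      rw [smul_smul, hv]
      simp [pow_succ]
    rw [heq] at h2
    exact h2
  have hvM : ∀ s ∈ Icc a b, ‖v (n+1) s‖ ≤ M := by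
    intro s hs
    rw [hv]
    simp only [norm_smul, norm_pow, norm_neg, norm_one, one_pow, one_mul]
    exact hM _ (hmaps hs)
  have hx' : a + b - x ∈ Icc a b := hmaps hx
  have h := taylor_forward n v hab hvd hvM (a + b - x) hx'
  have e1 : v 0 (a + b - x) = u 0 x := by
    rw [hv]; simp only [pow_zero, one_smul]
    congr 1; ring
  have e2 : ∑ m ∈ Finset.range (n+1), (((a + b - x - a)^m / m.factorial) • v m a)
      = ∑ m ∈ Finset.range (n+1), (((x - b)^m / m.factorial) • u m b) := by
    apply Finset.sum_congr rfl
    intro m _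
    rw [hv]
    simp only [add_sub_cancel_left]
    rw [smul_smul]
    have heq : (a + b - x - a)^m / (m.factorial:ℝ) * (-1:ℝ)^m = (x - b)^m / m.factorial := by
      rw [div_mul_eq_mul_div, ← mul_pow]
      congr 2
      ring
    rw [heq]
  rw [e1, e2] at h
  have e3 : a + b - x - a = b - x := by ring
  rw [e3] at h
  exact h

end BDFAux

theorem bdf_consistency_bound (k : ℕ) (hk : 1 ≤ k)
    (δc : ℕ → ℝ)
    (hδ : ∀ ζ : ℂ, ∑ j ∈ Finset.range (k + 1), (δc j : ℂ) * ζ ^ j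
        = ∑ ℓ ∈ Finset.Icc 1 k, ((ℓ : ℂ))⁻¹ * (1 - ζ) ^ ℓ) :
    ∃ C : ℝ, ∀ (X : Type*) [NormedAddCommGroup X] [NormedSpace ℝ X]
      (t τ : ℝ), 0 < τ → ∀ u : ℕ → ℝ → X,
      (∀ m < k + 1, ∀ s ∈ Icc (t - k * τ) t,
        HasDerivWithinAt (u m) (u (m + 1) s) (Icc (t - k * τ) t) s) →
      ContinuousOn (u (k + 1)) (Icc (t - k * τ) t) →
      ∀ M : ℝ, (∀ s ∈ Icc (t - k * τ) t, ‖u (k + 1) s‖ ≤ M) →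
      ‖(1 / τ) • ∑ j ∈ Finset.range (k + 1), δc j • u 0 (t - j * τ) - u 1 t‖
        ≤ C * τ ^ k * M := by
  refine ⟨∑ j ∈ Finset.range (k+1), |δc j| * (j:ℝ)^(k+1) / (k+1).factorial, ?_⟩
  intro X _ _ t τ hτ u hu hcont M hM
  have hmom := bdf_moments k δc hδ
  have hab : t - (k:ℝ)*τ ≤ t := by nlinarith [Nat.cast_nonneg (α := ℝ) k]
  have hmem : ∀ j ∈ Finset.range (k+1), t - (j:ℝ)*τ ∈ Icc (t - (k:ℝ)*τ) t := by
    intro j hj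
    simp only [Finset.mem_range, Nat.lt_succ_iff] at hj
    have hjk : (j:ℝ) ≤ (k:ℝ) := by exact_mod_cast hj
    have hj0 : (0:ℝ) ≤ (j:ℝ) := Nat.cast_nonneg j
    constructor
    · nlinarith
    · nlinarith
  have hR : ∀ j ∈ Finset.range (k+1),
      ‖u 0 (t - (j:ℝ)*τ) - ∑ m ∈ Finset.range (k+1),
          ((((t - (j:ℝ)*τ) - t)^m / m.factorial) • u m t)‖
        ≤ M * ((j:ℝ)*τ)^(k+1) / (k+1).factorial := by
    intro j hj
    have h := taylor_backward k u hab hu hM (t - (j:ℝ)*τ) (hmem j hj)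
    have he : t - (t - (j:ℝ)*τ) = (j:ℝ)*τ := by ring
    rwa [he] at h
  have key : ∑ j ∈ Finset.range (k+1), δc j •
      (∑ m ∈ Finset.range (k+1), ((((t - (j:ℝ)*τ) - t)^m / m.factorial) • u m t))
      = τ • u 1 t := by
    have step1 : ∀ j ∈ Finset.range (k+1), δc j •
        (∑ m ∈ Finset.range (k+1), ((((t - (j:ℝ)*τ) - t)^m / m.factorial) • u m t))
        = ∑ m ∈ Finset.range (k+1), ((δc j * ((j:ℝ))^m) * ((-τ)^m / m.factorial)) • u m t := by
      intro j _
      rw [Finset.smul_sum]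
      apply Finset.sum_congr rfl
      intro m _
      rw [smul_smul]
      congr 1
      have he : (t - (j:ℝ)*τ) - t = (j:ℝ) * -τ := by ring
      rw [he, mul_pow]
      ring
    rw [Finset.sum_congr rfl step1, Finset.sum_comm]
    have step2 : ∀ m ∈ Finset.range (k+1),
        ∑ j ∈ Finset.range (k+1), ((δc j * ((j:ℝ))^m) * ((-τ)^m / m.factorial)) • u m t
        = (if m = 1 then τ else 0) • u m t := by
      intro m hm
      rw [← Finset.sum_smul]
      congr 1
      rw [← Finset.sum_mul, hmom m (by simpa [Nat.lt_succ_iff] using hm)]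
      split_ifs with h
      · subst h; norm_num
      · ring
    rw [Finset.sum_congr rfl step2]
    have step3 : ∀ m ∈ Finset.range (k+1), (if m = 1 then τ else 0) • u m t
        = if m = 1 then τ • u m t else 0 := by
      intro m _; split_ifs <;> simp
    rw [Finset.sum_congr rfl step3, Finset.sum_ite_eq' (Finset.range (k+1)) 1]
    rw [if_pos (Finset.mem_range.mpr (by omega))]
  have hdecomp : ∑ j ∈ Finset.range (k+1), δc j • u 0 (t - (j:ℝ)*τ)
      = (∑ j ∈ Finset.range (k+1), δc j • (u 0 (t - (j:ℝ)*τ)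
          - ∑ m ∈ Finset.range (k+1), ((((t - (j:ℝ)*τ) - t)^m / m.factorial) • u m t)))
        + τ • u 1 t := by
    rw [← key, ← Finset.sum_add_distrib]
    apply Finset.sum_congr rfl
    intro j _
    rw [← smul_add]
    congr 1
    abel
  have hτne : τ ≠ 0 := ne_of_gt hτ
  have hgoal_eq : (1 / τ) • (∑ j ∈ Finset.range (k+1), δc j • u 0 (t - (j:ℝ)*τ)) - u 1 t
      = (1 / τ) • (∑ j ∈ Finset.range (k+1), δc j • (u 0 (t - (j:ℝ)*τ)
          - ∑ m ∈ Finset.range (k+1), ((((t - (j:ℝ)*τ) - t)^m / m.factorial) • u m t))) := by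
    rw [hdecomp, smul_add]
    have he : (1/τ) • (τ • u 1 t) = u 1 t := by
      rw [smul_smul, one_div, inv_mul_cancel₀ hτne, one_smul]
    rw [he]
    abel
  rw [hgoal_eq, norm_smul, Real.norm_eq_abs, abs_of_pos (by positivity : (0:ℝ) < 1/τ)]
  have hnorm : ‖∑ j ∈ Finset.range (k+1), δc j • (u 0 (t - (j:ℝ)*τ)
      - ∑ m ∈ Finset.range (k+1), ((((t - (j:ℝ)*τ) - t)^m / m.factorial) • u m t))‖
      ≤ ∑ j ∈ Finset.range (k+1), |δc j| * (M * ((j:ℝ)*τ)^(k+1) / (k+1).factorial) := by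
    refine (norm_sum_le _ _).trans ?_
    apply Finset.sum_le_sum
    intro j hj
    rw [norm_smul, Real.norm_eq_abs]
    exact mul_le_mul_of_nonneg_left (hR j hj) (abs_nonneg _)
  refine le_trans (mul_le_mul_of_nonneg_left hnorm (by positivity)) (le_of_eq ?_)
  rw [Finset.mul_sum, Finset.sum_mul, Finset.sum_mul]
  apply Finset.sum_congr rfl
  intro j _
  rw [mul_pow]
  have hfac : ((k+1).factorial : ℝ) ≠ 0 := by positivity
  field_simp
  ring
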